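/- Under the Three-Parameter Beta–Normal hierarchy β | ζ ∼ N(0, ζ), ζ | ξ ∼ Gamma(u, ξ), ξ ∼ Gamma(a, τ), with 0 < a, u and τ > 0, the marginal prior of β places unbounded density at zero when u ≤ 1/2: the marginal density p(β) = ∫₀^∞ N(β; 0, ζ) p(ζ) dζ satisfies p(β) → ∞ as β → 0 whenever u ≤ 1/2, where p(ζ) ∝ ζ^{u−1}(ζ+τ)^{−(a+u)}. -/

import Mathlib

open Real MeasureTheory Filter Set

lemma half_le_exp_neg_half : (1:ℝ)/2 ≤ Real.exp (-(1/2)) := by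
  have h1 : Real.exp (1/2) * Real.exp (1/2) = Real.exp 1 := by
    rw [← Real.exp_add]; norm_num
  have h2 : Real.exp 1 ≤ 3 := by
    have := Real.exp_one_lt_d9; linarith
  have hpos := Real.exp_pos (1/2 : ℝ)
  have h3 : Real.exp (1/2) ≤ 2 := by nlinarith
  rw [show (-(1/2) : ℝ) = -(1/2) from rfl, Real.exp_neg]
  rw [le_inv_comm₀ (by norm_num) hpos]
  linarith

/-- Under the TPBN hierarchy, the marginal prior density
`p(β) = ∫₀^∞ N(β; 0, ζ) p(ζ) dζ`, with beta-prime mixing density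
`p(ζ) = [Γ(a+u)/(Γ(a)Γ(u))] τ^a ζ^{u-1}(ζ+τ)^{-(a+u)}`, diverges to `∞`
as `β → 0` whenever `u ≤ 1/2`. -/
theorem tpbn_marginal_unbounded_at_zero
    (a u τ : ℝ) (ha : 0 < a) (hu : 0 < u) (hu' : u ≤ 1 / 2) (hτ : 0 < τ)
    (p : ℝ → ℝ)
    (hp : ∀ β : ℝ, p β = ∫ ζ in Set.Ioi (0 : ℝ),
      (2 * π * ζ) ^ (-(1 : ℝ) / 2) * Real.exp (-β ^ 2 / (2 * ζ)) *
        (Real.Gamma (a + u) / (Real.Gamma a * Real.Gamma u) *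
          τ ^ a * ζ ^ (u - 1) * (ζ + τ) ^ (-(a + u)))) :
    Tendsto p (nhdsWithin 0 {0}ᶜ) atTop := by
  have hπ : (0:ℝ) < 2 * π := by positivity
  set C : ℝ := Real.Gamma (a + u) / (Real.Gamma a * Real.Gamma u) * τ ^ a with hCdef
  have hGau := Real.Gamma_pos_of_pos (show (0:ℝ) < a + u by linarith)
  have hGa := Real.Gamma_pos_of_pos ha
  have hGu := Real.Gamma_pos_of_pos hu
  have hCpos : 0 < C := by positivity
  set g : ℝ → ℝ → ℝ := fun β ζ =>
      (2 * π * ζ) ^ (-(1 : ℝ) / 2) * Real.exp (-β ^ 2 / (2 * ζ)) *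
        (C * ζ ^ (u - 1) * (ζ + τ) ^ (-(a + u))) with hgdef
  have hpg : ∀ β, p β = ∫ ζ in Set.Ioi (0:ℝ), g β ζ := by
    intro β; rw [hp β]
  set c0 : ℝ := (2 * π) ^ (-(1:ℝ)/2) * C * (1 + τ) ^ (-(a + u)) with hc0def
  have hc0pos : 0 < c0 := by positivity
  -- nonnegativity on Ioi 0
  have hg_nonneg : ∀ β, ∀ ζ ∈ Ioi (0:ℝ), 0 ≤ g β ζ := by
    intro β ζ hζ
    have hζ0 : 0 < ζ := hζ
    have hζτ : 0 < ζ + τ := by linarith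
    have h2πζ : 0 < 2 * π * ζ := by positivity
    simp only [hgdef]
    positivity
  -- continuity on Ioi 0
  have hg_cont : ∀ β, ContinuousOn (g β) (Ioi (0:ℝ)) := by
    intro β
    have h1 : ContinuousOn (fun ζ : ℝ => (2 * π * ζ) ^ (-(1:ℝ)/2)) (Ioi 0) := by
      apply ContinuousOn.rpow_const
      · exact (continuous_const.mul continuous_id).continuousOn
      · intro ζ hζ; left
        have : (0:ℝ) < ζ := hζ
        positivity
    have h2 : ContinuousOn (fun ζ : ℝ => Real.exp (-β ^ 2 / (2 * ζ))) (Ioi 0) := by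
      apply Real.continuous_exp.comp_continuousOn
      apply ContinuousOn.div continuousOn_const
      · exact (continuous_const.mul continuous_id).continuousOn
      · intro ζ hζ
        have : (0:ℝ) < ζ := hζ
        positivity
    have h3 : ContinuousOn (fun ζ : ℝ => ζ ^ (u - 1)) (Ioi 0) := by
      apply ContinuousOn.rpow_const continuousOn_id
      intro ζ hζ; left; exact ne_of_gt hζ
    have h4 : ContinuousOn (fun ζ : ℝ => (ζ + τ) ^ (-(a + u))) (Ioi 0) := by
      apply ContinuousOn.rpow_const ((continuous_id.add continuous_const).continuousOn)
      intro ζ hζ; left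
      have : (0:ℝ) < ζ := hζ
      show ζ + τ ≠ 0; positivity
    exact (h1.mul h2).mul ((continuousOn_const.mul h3).mul h4)
  -- integrability for β ≠ 0
  have hg_int : ∀ β : ℝ, β ≠ 0 → IntegrableOn (g β) (Ioi (0:ℝ)) := by
    intro β hβ
    have hβ2 : 0 < β ^ 2 := by positivity
    have hmeas : ∀ s : Set ℝ, s ⊆ Ioi 0 → MeasurableSet s → AEStronglyMeasurable (g β) (volume.restrict s) := by
      intro s hs hms
      exact (((hg_cont β).mono hs).aestronglyMeasurable hms)
    have hIoc : IntegrableOn (g β) (Ioc 0 1) := by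
      set K1 : ℝ := (2 * π) ^ (-(1:ℝ)/2) * (2 / β ^ 2) * (C * τ ^ (-(a + u))) with hK1
      have hbound_int : IntegrableOn (fun ζ : ℝ => K1 * ζ ^ (u - 1/2)) (Ioc 0 1) := by
        apply Integrable.const_mul
        rw [← IntegrableOn, ← intervalIntegrable_iff_integrableOn_Ioc_of_le zero_le_one]
        exact intervalIntegral.intervalIntegrable_rpow' (by linarith)
      apply hbound_int.mono' (hmeas _ Ioc_subset_Ioi_self measurableSet_Ioc)
      filter_upwards [ae_restrict_mem measurableSet_Ioc] with ζ hζ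
      obtain ⟨hζ0, hζ1⟩ := hζ
      rw [Real.norm_of_nonneg (hg_nonneg β ζ hζ0)]
      have hsplit : (2 * π * ζ) ^ (-(1:ℝ)/2) = (2 * π) ^ (-(1:ℝ)/2) * ζ ^ (-(1:ℝ)/2) :=
        Real.mul_rpow (le_of_lt hπ) (le_of_lt hζ0)
      have hexp : Real.exp (-β ^ 2 / (2 * ζ)) ≤ 2 * ζ / β ^ 2 := by
        have hx : 0 < β ^ 2 / (2 * ζ) := by positivity
        have h1 : β ^ 2 / (2 * ζ) ≤ Real.exp (β ^ 2 / (2 * ζ)) :=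
          le_of_lt (lt_of_lt_of_le (by linarith [Real.add_one_le_exp (β ^ 2 / (2 * ζ))])
            (le_refl _))
        have h2 : Real.exp (-β ^ 2 / (2 * ζ)) = (Real.exp (β ^ 2 / (2 * ζ)))⁻¹ := by
          rw [← Real.exp_neg]; ring_nf
        rw [h2]
        have h3 : (Real.exp (β ^ 2 / (2 * ζ)))⁻¹ ≤ (β ^ 2 / (2 * ζ))⁻¹ :=
          inv_anti₀ hx h1
        calc (Real.exp (β ^ 2 / (2 * ζ)))⁻¹ ≤ (β ^ 2 / (2 * ζ))⁻¹ := h3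
          _ = 2 * ζ / β ^ 2 := by field_simp
      have hτb : (ζ + τ) ^ (-(a + u)) ≤ τ ^ (-(a + u)) :=
        Real.rpow_le_rpow_of_nonpos hτ (by linarith) (by linarith)
      have hζτ : (0:ℝ) < ζ + τ := by linarith
      calc g β ζ = (2 * π) ^ (-(1:ℝ)/2) * ζ ^ (-(1:ℝ)/2) * Real.exp (-β ^ 2 / (2 * ζ)) *
            (C * ζ ^ (u - 1) * (ζ + τ) ^ (-(a + u))) := by
            simp only [hgdef]; rw [hsplit]
        _ ≤ (2 * π) ^ (-(1:ℝ)/2) * ζ ^ (-(1:ℝ)/2) * (2 * ζ / β ^ 2) *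
            (C * ζ ^ (u - 1) * τ ^ (-(a + u))) := by
            gcongr <;> positivity
        _ = K1 * (ζ ^ (-(1:ℝ)/2) * ζ ^ (1:ℝ) * ζ ^ (u - 1)) := by
            rw [hK1, Real.rpow_one]; ring
        _ = K1 * ζ ^ (u - 1/2) := by
            rw [← Real.rpow_add hζ0, ← Real.rpow_add hζ0]
            congr 1
            ring
    have hIoi : IntegrableOn (g β) (Ioi (1:ℝ)) := by
      set K2 : ℝ := (2 * π) ^ (-(1:ℝ)/2) * C with hK2
      have hbound_int : IntegrableOn (fun ζ : ℝ => K2 * ζ ^ (-(a + 3/2))) (Ioi 1) :=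
        (integrableOn_Ioi_rpow_of_lt (by linarith) one_pos).const_mul K2
      apply hbound_int.mono' (hmeas _ (fun x hx => show (0:ℝ) < x from lt_trans one_pos hx) measurableSet_Ioi)
      filter_upwards [ae_restrict_mem measurableSet_Ioi] with ζ hζ1
      have hζ0 : (0:ℝ) < ζ := lt_trans one_pos hζ1
      rw [Real.norm_of_nonneg (hg_nonneg β ζ hζ0)]
      have hsplit : (2 * π * ζ) ^ (-(1:ℝ)/2) = (2 * π) ^ (-(1:ℝ)/2) * ζ ^ (-(1:ℝ)/2) :=
        Real.mul_rpow (le_of_lt hπ) (le_of_lt hζ0)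
      have hexp : Real.exp (-β ^ 2 / (2 * ζ)) ≤ 1 := by
        rw [Real.exp_le_one_iff, neg_div]
        have : (0:ℝ) ≤ β ^ 2 / (2 * ζ) := by positivity
        linarith
      have hτb : (ζ + τ) ^ (-(a + u)) ≤ ζ ^ (-(a + u)) :=
        Real.rpow_le_rpow_of_nonpos hζ0 (by linarith) (by linarith)
      have hζτ : (0:ℝ) < ζ + τ := by linarith
      calc g β ζ = (2 * π) ^ (-(1:ℝ)/2) * ζ ^ (-(1:ℝ)/2) * Real.exp (-β ^ 2 / (2 * ζ)) *
            (C * ζ ^ (u - 1) * (ζ + τ) ^ (-(a + u))) := by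
            simp only [hgdef]; rw [hsplit]
        _ ≤ (2 * π) ^ (-(1:ℝ)/2) * ζ ^ (-(1:ℝ)/2) * 1 *
            (C * ζ ^ (u - 1) * ζ ^ (-(a + u))) := by
            gcongr <;> positivity
        _ = K2 * (ζ ^ (-(1:ℝ)/2) * ζ ^ (u - 1) * ζ ^ (-(a + u))) := by
            rw [hK2]; ring
        _ = K2 * ζ ^ (-(a + 3/2)) := by
            rw [← Real.rpow_add hζ0, ← Real.rpow_add hζ0]
            congr 1
            ring
    have : Ioc (0:ℝ) 1 ∪ Ioi 1 = Ioi 0 := Ioc_union_Ioi_eq_Ioi zero_le_one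
    rw [← this]
    exact hIoc.union hIoi
  -- main argument
  rw [tendsto_atTop]
  intro M
  set ε : ℝ := min (Real.exp (-(2 * M / c0))) (1/2) with hεdef
  have hε0 : 0 < ε := lt_min (Real.exp_pos _) (by norm_num)
  have hε1 : ε ≤ 1/2 := min_le_right _ _
  have hεlog : -Real.log ε ≥ 2 * M / c0 := by
    have h1 : Real.log ε ≤ Real.log (Real.exp (-(2 * M / c0))) :=
      Real.log_le_log hε0 (min_le_left _ _)
    rw [Real.log_exp] at h1
    linarith
  have hβev : ∀ᶠ β : ℝ in nhdsWithin 0 {0}ᶜ, β ^ 2 ≤ ε := by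
    apply eventually_nhdsWithin_of_eventually_nhds
    have hT : Tendsto (fun β : ℝ => β ^ 2) (nhds 0) (nhds 0) := by
      simpa using ((continuous_pow 2).tendsto (0:ℝ))
    exact hT.eventually (eventually_le_nhds hε0)
  filter_upwards [hβev, eventually_mem_nhdsWithin] with β hβ2 hβne
  have hβ0 : β ≠ 0 := hβne
  -- lower bound of g on Ioo ε 1
  have hlow : ∀ ζ ∈ Ioo ε 1, c0 / 2 * ζ⁻¹ ≤ g β ζ := by
    intro ζ hζ
    obtain ⟨hζε, hζ1⟩ := hζ
    have hζ0 : 0 < ζ := lt_of_lt_of_le hε0 (le_of_lt hζε)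
    have hζτ : (0:ℝ) < ζ + τ := by linarith
    have hsplit : (2 * π * ζ) ^ (-(1:ℝ)/2) = (2 * π) ^ (-(1:ℝ)/2) * ζ ^ (-(1:ℝ)/2) :=
      Real.mul_rpow (le_of_lt hπ) (le_of_lt hζ0)
    have hexp : (1:ℝ)/2 ≤ Real.exp (-β ^ 2 / (2 * ζ)) := by
      have h1 : β ^ 2 / (2 * ζ) ≤ 1/2 := by
        rw [div_le_div_iff₀ (by linarith) (by norm_num)]
        have : β ^ 2 ≤ ζ := le_trans hβ2 (le_of_lt hζε)
        linarith
      have h2 : -(1/2 : ℝ) ≤ -β ^ 2 / (2 * ζ) := by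
        rw [neg_div]; linarith
      exact le_trans half_le_exp_neg_half (Real.exp_le_exp.2 h2)
    have hpow : ζ⁻¹ ≤ ζ ^ (-(1:ℝ)/2) * ζ ^ (u - 1) := by
      rw [← Real.rpow_add hζ0]
      have h1 : ζ ^ (-1 : ℝ) ≤ ζ ^ (-(1:ℝ)/2 + (u - 1)) :=
        Real.rpow_le_rpow_of_exponent_ge hζ0 (le_of_lt hζ1) (by linarith)
      rwa [Real.rpow_neg_one] at h1
    have hτb : (1 + τ) ^ (-(a + u)) ≤ (ζ + τ) ^ (-(a + u)) :=
      Real.rpow_le_rpow_of_nonpos hζτ (by linarith) (by linarith)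
    calc c0 / 2 * ζ⁻¹
        = (2 * π) ^ (-(1:ℝ)/2) * (1/2) * (C * ζ⁻¹ * (1 + τ) ^ (-(a + u))) := by
          rw [hc0def]; ring
      _ ≤ (2 * π) ^ (-(1:ℝ)/2) * Real.exp (-β ^ 2 / (2 * ζ)) *
          (C * (ζ ^ (-(1:ℝ)/2) * ζ ^ (u - 1)) * (ζ + τ) ^ (-(a + u))) := by
          gcongr <;> positivity
      _ = (2 * π) ^ (-(1:ℝ)/2) * ζ ^ (-(1:ℝ)/2) * Real.exp (-β ^ 2 / (2 * ζ)) *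
          (C * ζ ^ (u - 1) * (ζ + τ) ^ (-(a + u))) := by ring
      _ = g β ζ := by simp only [hgdef]; rw [hsplit]
  -- put it together
  have hint := hg_int β hβ0
  have hmono : ∫ ζ in Ioo ε 1, g β ζ ≤ ∫ ζ in Ioi (0:ℝ), g β ζ := by
    apply setIntegral_mono_set hint
    · filter_upwards [ae_restrict_mem measurableSet_Ioi] with ζ hζ
      exact hg_nonneg β ζ hζ
    · filter_upwards with ζ hζ
      exact lt_of_lt_of_le hε0 (le_of_lt hζ.1)
  have hint_inv : IntegrableOn (fun ζ : ℝ => c0 / 2 * ζ⁻¹) (Ioo ε 1) := by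
    apply Integrable.const_mul
    rw [← IntegrableOn, ← integrableOn_Ioc_iff_integrableOn_Ioo,
      ← intervalIntegrable_iff_integrableOn_Ioc_of_le (by linarith)]
    exact intervalIntegral.intervalIntegrable_inv (fun x hx => by
      rcases lt_or_ge 0 x with h | h
      · exact ne_of_gt h
      · exfalso
        rw [uIcc_of_le (by linarith)] at hx
        linarith [hx.1]) continuousOn_id
  have hmono2 : ∫ ζ in Ioo ε 1, c0 / 2 * ζ⁻¹ ≤ ∫ ζ in Ioo ε 1, g β ζ := by
    apply setIntegral_mono_on hint_inv (hint.mono_set (fun ζ hζ =>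
      lt_of_lt_of_le hε0 (le_of_lt hζ.1))) measurableSet_Ioo
    exact hlow
  have hcomp : ∫ ζ in Ioo ε 1, (c0 / 2 * ζ⁻¹) = c0 / 2 * (-Real.log ε) := by
    rw [integral_const_mul, ← integral_Ioc_eq_integral_Ioo,
      ← intervalIntegral.integral_of_le (by linarith)]
    rw [integral_inv_of_pos hε0 one_pos]
    rw [Real.log_div one_ne_zero (ne_of_gt hε0), Real.log_one]
    ring
  have hfinal : M ≤ ∫ ζ in Ioo ε 1, c0 / 2 * ζ⁻¹ := by
    rw [hcomp]
    have : c0 / 2 * (2 * M / c0) ≤ c0 / 2 * (-Real.log ε) := by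
      apply mul_le_mul_of_nonneg_left hεlog (by positivity)
    calc M = c0 / 2 * (2 * M / c0) := by field_simp
      _ ≤ c0 / 2 * (-Real.log ε) := this
  rw [hpg β]
  linarith
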